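/- arXiv:2207.08921 — 3 statements merged into one kernel-verified Lean document; each statement's English description precedes it below -/
import Mathlib

section
/- There is no holomorphic function ψ on the unit disk such that the multiplication operator M_ψ f = ψ f is an isometry from H^∞(𝔻) (with sup norm) into the Bloch space 𝓑(𝔻) (with norm |g(0)| + sup_z (1-|z|²)|g'(z)|). -/
open Metric Filter

/-- The open unit disk in ℂ. -/
noncomputable def unitDisk : Set ℂ := Metric.ball 0 1

/-- Supremum norm over the unit disk. -/
noncomputable def supNorm (f : ℂ → ℂ) : ℝ :=
  sSup ((fun z => ‖f z‖) '' unitDisk)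

/-- Bloch seminorm over the unit disk. -/
noncomputable def blochSemi (g : ℂ → ℂ) : ℝ :=
  sSup ((fun z => (1 - ‖z‖ ^ 2) * ‖deriv g z‖) '' unitDisk)

/-- Bloch norm over the unit disk. -/
noncomputable def blochNorm (g : ℂ → ℂ) : ℝ :=
  ‖g 0‖ + blochSemi g
lemma mem_unitDisk {z : ℂ} : z ∈ unitDisk ↔ ‖z‖ < 1 := by
  simp [unitDisk, mem_ball_zero_iff]
noncomputable def mo (a z : ℂ) : ℂ := (a - z) / (1 - (starRingEnd ℂ) a * z)
lemma mo_denom_ne {a z : ℂ} (h : ‖a‖ * ‖z‖ < 1) :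
    (1 - (starRingEnd ℂ) a * z) ≠ 0 := by
  intro hzero
  have h1 : (starRingEnd ℂ) a * z = 1 := by linear_combination -hzero
  have := congrArg (‖·‖) h1
  simp [norm_mul] at this
  rw [this] at h; linarith
lemma mo_normSq_identity (a z : ℂ) :
    Complex.normSq (1 - (starRingEnd ℂ) a * z) =
      Complex.normSq (a - z) + (1 - Complex.normSq a) * (1 - Complex.normSq z) := by
  have key : ((Complex.normSq (1 - (starRingEnd ℂ) a * z) : ℂ)) =
      (Complex.normSq (a - z) : ℂ) + (1 - (Complex.normSq a : ℂ)) * (1 - (Complex.normSq z : ℂ)) := by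
    rw [← Complex.mul_conj, ← Complex.mul_conj, ← Complex.mul_conj, ← Complex.mul_conj]
    simp only [map_sub, map_mul, map_one, Complex.conj_conj]
    ring
  exact_mod_cast key

lemma abs_mo_lt_one {a z : ℂ} (ha : ‖a‖ < 1) (hz : ‖z‖ < 1) :
    ‖mo a z‖ < 1 := by
  have ha0 : (0:ℝ) ≤ ‖a‖ := norm_nonneg a
  have hz0 : (0:ℝ) ≤ ‖z‖ := norm_nonneg z
  have hprod : ‖a‖ * ‖z‖ < 1 := by nlinarith
  have hden := mo_denom_ne hprod
  have hdenpos : 0 < ‖1 - (starRingEnd ℂ) a * z‖ := by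
    simpa [norm_pos_iff] using hden
  rw [mo, norm_div, div_lt_one hdenpos]
  have hsq : Complex.normSq (a - z) < Complex.normSq (1 - (starRingEnd ℂ) a * z) := by
    rw [mo_normSq_identity a z]
    have h1 : Complex.normSq a < 1 := by
      rw [← Complex.sq_norm]; nlinarith
    have h2 : Complex.normSq z < 1 := by
      rw [← Complex.sq_norm]; nlinarith
    nlinarith
  calc ‖a - z‖ = Real.sqrt (Complex.normSq (a-z)) := Complex.norm_def _
    _ < Real.sqrt (Complex.normSq (1 - (starRingEnd ℂ) a * z)) := by
        apply Real.sqrt_lt_sqrt (Complex.normSq_nonneg _) hsq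
    _ = ‖_‖ := (Complex.norm_def _).symm

lemma mo_differentiableAt {a z : ℂ} (h : ‖a‖ * ‖z‖ < 1) :
    DifferentiableAt ℂ (mo a) z := by
  apply DifferentiableAt.div
  · fun_prop
  · fun_prop
  · exact mo_denom_ne h

lemma mo_deriv {a z : ℂ} (h : ‖a‖ * ‖z‖ < 1) :
    deriv (mo a) z = (a * (starRingEnd ℂ) a - 1) / (1 - (starRingEnd ℂ) a * z)^2 := by
  have hden := mo_denom_ne h
  have h1 : DifferentiableAt ℂ (fun w : ℂ => a - w) z := by fun_prop
  have h2 : DifferentiableAt ℂ (fun w : ℂ => 1 - (starRingEnd ℂ) a * w) z := by fun_prop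
  have : mo a = fun w => (a - w) / (1 - (starRingEnd ℂ) a * w) := rfl
  rw [this, deriv_fun_div h1 h2 hden]
  have d1 : deriv (fun w : ℂ => a - w) z = -1 := by
    rw [deriv_const_sub, deriv_id'']
  have d2 : deriv (fun w : ℂ => 1 - (starRingEnd ℂ) a * w) z = -((starRingEnd ℂ) a) := by
    rw [deriv_const_sub, deriv_const_mul _ (differentiableAt_fun_id), deriv_id'', mul_one]
  rw [d1, d2]
  field_simp
  ring
lemma mo_apply_self (a : ℂ) : mo a a = 0 := by simp [mo]

lemma mo_apply_zero (a : ℂ) : mo a 0 = a := by simp [mo]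


lemma supNorm_mo {a : ℂ} (ha : ‖a‖ < 1) : supNorm (mo a) = 1 := by
  have hub : ∀ x ∈ (fun z => ‖mo a z‖) '' unitDisk, x ≤ 1 := by
    rintro x ⟨z, hz, rfl⟩
    exact (abs_mo_lt_one ha (mem_unitDisk.mp hz)).le
  have hbdd : BddAbove ((fun z => ‖mo a z‖) '' unitDisk) := ⟨1, hub⟩
  refine le_antisymm (Real.sSup_le hub zero_le_one) ?_
  by_contra hlt
  push_neg at hlt
  set S := sSup ((fun z => ‖mo a z‖) '' unitDisk) with hS
  have hS0 : 0 ≤ S := by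
    apply Real.sSup_nonneg
    rintro x ⟨z, hz, rfl⟩; positivity
  have hlt' : S < 1 := hlt
  set t : ℝ := (S + 1) / 2 with ht
  have ht0 : 0 ≤ t := by positivity
  have ht1 : t < 1 := by simp only [ht]; linarith
  have htS : S < t := by simp only [ht]; linarith
  -- find an element of the image with value ≥ t
  have hexists : ∃ z ∈ unitDisk, t ≤ ‖mo a z‖ := by
    rcases eq_or_ne a 0 with rfl | ha0
    · refine ⟨((t:ℝ):ℂ), ?_, ?_⟩
      · simpa [mem_unitDisk, Complex.norm_real, Real.norm_eq_abs, abs_of_nonneg ht0] using ht1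
      · simp [mo, Complex.norm_real, Real.norm_eq_abs, abs_of_nonneg ht0]
    · set u : ℝ := ‖a‖ with hu
      have hupos : 0 < u := norm_pos_iff.mpr ha0
      set z : ℂ := -(((t/u : ℝ)):ℂ) * a with hz
      have habsz : ‖z‖ = t := by
        simp only [hz, norm_mul, norm_neg, Complex.norm_real, Real.norm_eq_abs, abs_div, ← hu,
          abs_of_nonneg ht0, abs_of_nonneg hupos.le]
        field_simp
      refine ⟨z, by simpa [mem_unitDisk, habsz] using ht1, ?_⟩
      have hnum : a - z = (((1 + t/u : ℝ)):ℂ) * a := by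
        simp only [hz]; push_cast; ring
      have habs_num : ‖a - z‖ = u + t := by
        rw [hnum, norm_mul, Complex.norm_real, Real.norm_eq_abs, abs_of_nonneg (by positivity), ← hu]
        field_simp
      have hden : 1 - (starRingEnd ℂ) a * z = (((1 + t*u : ℝ)):ℂ) := by
        have hca : (starRingEnd ℂ) a * a = ((Complex.normSq a : ℝ) : ℂ) := by
          rw [mul_comm, Complex.mul_conj]
        have hnsq : Complex.normSq a = u^2 := by
          rw [← Complex.sq_norm, hu]
        simp only [hz]
        rw [show (starRingEnd ℂ) a * (-(((t/u : ℝ)):ℂ) * a) = -(((t/u : ℝ)):ℂ) * ((starRingEnd ℂ) a * a) by ring, hca, hnsq]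
        have huC : (u:ℂ) ≠ 0 := Complex.ofReal_ne_zero.mpr hupos.ne'
        push_cast
        field_simp
        ring
      have habs_den : ‖1 - (starRingEnd ℂ) a * z‖ = 1 + t*u := by
        rw [hden, Complex.norm_real, Real.norm_eq_abs, abs_of_nonneg (by positivity)]
      have : ‖mo a z‖ = (u + t)/(1 + t*u) := by
        rw [mo, norm_div, habs_num, habs_den]
      rw [this, le_div_iff₀ (by positivity)]
      nlinarith [mul_nonneg (mul_nonneg ht0 ht0) hupos.le, mul_nonneg ht0 hupos.le]
  obtain ⟨z, hz, hle⟩ := hexists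
  have : t ≤ S := le_trans hle (le_csSup hbdd ⟨z, hz, rfl⟩)
  linarith
lemma unitDisk_eq : unitDisk = Metric.ball (0:ℂ) 1 := rfl

lemma zero_mem_unitDisk : (0:ℂ) ∈ unitDisk := by simp [mem_unitDisk]

lemma diffAt_of_mem {ψ : ℂ → ℂ} (hψ : DifferentiableOn ℂ ψ unitDisk) {z : ℂ}
    (hz : z ∈ unitDisk) : DifferentiableAt ℂ ψ z :=
  hψ.differentiableAt (by rw [unitDisk_eq] at hz ⊢; exact isOpen_ball.mem_nhds hz)

lemma schwarz_pick {ψ : ℂ → ℂ} (hψ : DifferentiableOn ℂ ψ unitDisk)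
    {m A : ℝ} (hm : ∀ z ∈ unitDisk, ‖ψ z‖ ≤ m) (hmA : m < A)
    {a : ℂ} (ha : a ∈ unitDisk) :
    (1 - ‖a‖ ^ 2) * ‖deriv ψ a‖ ≤ (A^2 - ‖ψ a‖^2)/A := by
  have haD : ‖a‖ < 1 := mem_unitDisk.mp ha
  have hm0 : 0 ≤ m := le_trans (norm_nonneg _) (hm a ha)
  have hA : 0 < A := lt_of_le_of_lt hm0 hmA
  have hAC : (A:ℂ) ≠ 0 := Complex.ofReal_ne_zero.mpr hA.ne'
  set w : ℂ := ψ a / (A:ℂ) with hw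
  have habsw : ‖w‖ = ‖ψ a‖ / A := by
    rw [hw, norm_div, Complex.norm_real, Real.norm_eq_abs, abs_of_pos hA]
  have hwlt : ‖w‖ < 1 := by
    rw [habsw, div_lt_one hA]; exact lt_of_le_of_lt (hm a ha) hmA
  set H : ℂ → ℂ := fun z => ψ (mo a z) / (A:ℂ) with hH
  have hHabs : ∀ z ∈ unitDisk, ‖H z‖ < 1 := by
    intro z hz
    have : mo a z ∈ unitDisk := mem_unitDisk.mpr (abs_mo_lt_one haD (mem_unitDisk.mp hz))
    rw [hH]
    simp only [norm_div, Complex.norm_real, Real.norm_eq_abs, abs_of_pos hA]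
    rw [div_lt_one hA]
    exact lt_of_le_of_lt (hm _ this) hmA
  have hHdiffAt : ∀ z ∈ unitDisk, DifferentiableAt ℂ H z := by
    intro z hz
    have h1 : DifferentiableAt ℂ (mo a) z :=
      mo_differentiableAt (by
        have := mem_unitDisk.mp hz
        nlinarith [norm_nonneg a, norm_nonneg z])
    have h2 : DifferentiableAt ℂ ψ (mo a z) :=
      diffAt_of_mem hψ (mem_unitDisk.mpr (abs_mo_lt_one haD (mem_unitDisk.mp hz)))
    exact (h2.comp z h1).div_const _
  have hH0 : H 0 = w := by rw [hH]; simp [mo_apply_zero, hw]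
  set G : ℂ → ℂ := (mo w) ∘ H with hG
  have hG0 : G 0 = 0 := by
    rw [hG]; simp only [Function.comp_apply, hH0, mo_apply_self]
  have hGdiff : DifferentiableOn ℂ G unitDisk := by
    intro z hz
    have h1 : DifferentiableAt ℂ (mo w) (H z) :=
      mo_differentiableAt (by
        have h2 := hHabs z hz
        nlinarith [norm_nonneg w, norm_nonneg (H z)])
    exact ((h1.comp z (hHdiffAt z hz)).differentiableWithinAt)
  have hGmaps : Set.MapsTo G unitDisk (Metric.ball (G 0) 1) := by
    intro z hz
    rw [hG0, mem_ball_zero_iff]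
    have : ‖G z‖ < 1 := abs_mo_lt_one hwlt (hHabs z hz)
    simpa using this
  have hSch : ‖deriv G 0‖ ≤ 1 := by
    have := Complex.norm_deriv_le_div_of_mapsTo_ball (by rw [unitDisk_eq] at hGdiff; exact hGdiff)
      (by rw [unitDisk_eq] at hGmaps; exact hGmaps.mono_right ball_subset_closedBall) one_pos
    simpa using this
  -- compute deriv G 0
  have hmodiff : DifferentiableAt ℂ (mo a) 0 := mo_differentiableAt (by simp)
  have hψa : DifferentiableAt ℂ ψ (mo a 0) := by
    rw [mo_apply_zero]; exact diffAt_of_mem hψ ha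
  have hderivH : deriv H 0 = deriv ψ a * (a * (starRingEnd ℂ) a - 1) / (A:ℂ) := by
    rw [hH]
    rw [deriv_div_const]
    have : deriv (fun z => ψ (mo a z)) 0 = deriv ψ (mo a 0) * deriv (mo a) 0 := by
      rw [show (fun z => ψ (mo a z)) = ψ ∘ (mo a) from rfl]
      exact deriv_comp 0 hψa hmodiff
    rw [this, mo_apply_zero, mo_deriv (by simp)]
    simp
  have hmowdiff : DifferentiableAt ℂ (mo w) (H 0) := by
    rw [hH0]
    exact mo_differentiableAt (by nlinarith [norm_nonneg w])
  have hderivG : deriv G 0 = deriv (mo w) w * (deriv ψ a * (a * (starRingEnd ℂ) a - 1) / (A:ℂ)) := by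
    rw [hG, deriv_comp 0 hmowdiff (hHdiffAt 0 zero_mem_unitDisk), hH0, hderivH]
  -- absolute values
  have hnsqa : ‖a * (starRingEnd ℂ) a - 1‖ = 1 - ‖a‖ ^ 2 := by
    rw [Complex.mul_conj]
    rw [show ((Complex.normSq a : ℝ):ℂ) - 1 = -((1 - (Complex.normSq a : ℝ):ℂ)) by ring]
    rw [norm_neg, show ((1:ℂ) - (Complex.normSq a : ℝ)) = (((1 - Complex.normSq a : ℝ)):ℂ) by push_cast; ring]
    rw [Complex.norm_real, Real.norm_eq_abs, abs_of_nonneg (by rw [← Complex.sq_norm]; nlinarith [norm_nonneg a]), Complex.sq_norm]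
  have hnsqw : ‖deriv (mo w) w‖ = 1/(1 - ‖w‖ ^ 2) := by
    rw [mo_deriv (by nlinarith [norm_nonneg w])]
    have h1 : ‖w * (starRingEnd ℂ) w - 1‖ = 1 - ‖w‖ ^ 2 := by
      rw [Complex.mul_conj]
      rw [show ((Complex.normSq w : ℝ):ℂ) - 1 = -((1 - (Complex.normSq w : ℝ):ℂ)) by ring]
      rw [norm_neg, show ((1:ℂ) - (Complex.normSq w : ℝ)) = (((1 - Complex.normSq w : ℝ)):ℂ) by push_cast; ring]
      rw [Complex.norm_real, Real.norm_eq_abs, abs_of_nonneg (by rw [← Complex.sq_norm]; nlinarith [norm_nonneg w]), Complex.sq_norm]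
    have h2 : ‖(1 - (starRingEnd ℂ) w * w)^2‖ = (1 - ‖w‖ ^ 2)^2 := by
      rw [norm_pow]
      congr 1
      rw [mul_comm, Complex.mul_conj]
      rw [show ((1:ℂ) - (Complex.normSq w : ℝ)) = (((1 - Complex.normSq w : ℝ)):ℂ) by push_cast; ring]
      rw [Complex.norm_real, Real.norm_eq_abs, abs_of_nonneg (by rw [← Complex.sq_norm]; nlinarith [norm_nonneg w]), Complex.sq_norm]
    rw [norm_div, h1, h2]
    have : (0:ℝ) < 1 - ‖w‖ ^ 2 := by nlinarith [norm_nonneg w]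
    field_simp
  have habsG : ‖deriv G 0‖ =
      (1/(1 - ‖w‖ ^ 2)) * (‖deriv ψ a‖ * (1 - ‖a‖ ^ 2) / A) := by
    have hfac : ‖deriv ψ a * (a * (starRingEnd ℂ) a - 1) / (A:ℂ)‖ =
        ‖deriv ψ a‖ * (1 - ‖a‖ ^ 2) / A := by
      rw [norm_div, norm_mul, hnsqa, Complex.norm_real, Real.norm_eq_abs, abs_of_pos hA]
    rw [hderivG, norm_mul, hnsqw, hfac]
  -- conclude
  have hkey : (1/(1 - ‖w‖ ^ 2)) * (‖deriv ψ a‖ * (1 - ‖a‖ ^ 2) / A) ≤ 1 := by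
    rw [← habsG]; exact hSch
  have hwpos : (0:ℝ) < 1 - ‖w‖ ^ 2 := by nlinarith [norm_nonneg w]
  have h1 : ‖deriv ψ a‖ * (1 - ‖a‖ ^ 2) ≤ A * (1 - ‖w‖ ^ 2) := by
    rw [one_div, inv_mul_le_iff₀ hwpos, div_le_iff₀ hA] at hkey
    nlinarith
  have h2 : A * (1 - ‖w‖ ^ 2) = (A^2 - ‖ψ a‖^2)/A := by
    rw [habsw]
    field_simp
  rw [← h2]
  nlinarith


lemma blochSemi_nonneg (g : ℂ → ℂ) : 0 ≤ blochSemi g := by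
  apply Real.sSup_nonneg
  rintro x ⟨z, hz, rfl⟩
  have h1 : ‖z‖ < 1 := mem_unitDisk.mp hz
  have h2 := norm_nonneg z
  have h3 : (0:ℝ) ≤ 1 - ‖z‖ ^ 2 := by nlinarith
  exact mul_nonneg h3 (norm_nonneg _)

lemma absmul_lt_one {a z : ℂ} (ha : ‖a‖ < 1) (hz : ‖z‖ < 1) :
    ‖a‖ * ‖z‖ < 1 := by
  nlinarith [norm_nonneg a, norm_nonneg z]

lemma abs_aca {a : ℂ} (ha : ‖a‖ < 1) :
    ‖a * (starRingEnd ℂ) a - 1‖ = 1 - ‖a‖ ^ 2 := by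
  rw [Complex.mul_conj]
  rw [show ((Complex.normSq a : ℝ):ℂ) - 1 = -((1 - (Complex.normSq a : ℝ):ℂ)) by ring]
  rw [norm_neg, show ((1:ℂ) - (Complex.normSq a : ℝ)) = (((1 - Complex.normSq a : ℝ)):ℂ) by push_cast; ring]
  rw [Complex.norm_real, Real.norm_eq_abs, abs_of_nonneg (by rw [← Complex.sq_norm]; nlinarith [norm_nonneg a]), Complex.sq_norm]

lemma abs_one_sub_ca {a : ℂ} (ha : ‖a‖ < 1) :
    ‖1 - (starRingEnd ℂ) a * a‖ = 1 - ‖a‖ ^ 2 := by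
  rw [mul_comm, Complex.mul_conj]
  rw [show ((1:ℂ) - (Complex.normSq a : ℝ)) = (((1 - Complex.normSq a : ℝ)):ℂ) by push_cast; ring]
  rw [Complex.norm_real, Real.norm_eq_abs, abs_of_nonneg (by rw [← Complex.sq_norm]; nlinarith [norm_nonneg a]), Complex.sq_norm]

lemma mo_real (a t : ℝ) : mo (a:ℂ) (t:ℂ) = (((a - t)/(1 - a*t) : ℝ) : ℂ) := by
  rw [mo, Complex.conj_ofReal]
  push_cast
  ring

lemma supNorm_pair :
    supNorm (fun z => mo (((1:ℝ)/2:ℝ):ℂ) z + mo (((-1:ℝ)/2:ℝ):ℂ) z) = 2 := by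
  have ha1 : ‖((((1:ℝ)/2:ℝ)):ℂ)‖ < 1 := by
    rw [Complex.norm_real, Real.norm_eq_abs, abs_lt]; constructor <;> norm_num
  have ha2 : ‖((((-1:ℝ)/2:ℝ)):ℂ)‖ < 1 := by
    rw [Complex.norm_real, Real.norm_eq_abs, abs_lt]; constructor <;> norm_num
  have hub : ∀ x ∈ (fun z => ‖mo (((1:ℝ)/2:ℝ):ℂ) z + mo (((-1:ℝ)/2:ℝ):ℂ) z‖) '' unitDisk, x ≤ 2 := by
    rintro x ⟨z, hz, rfl⟩
    have h1 := abs_mo_lt_one ha1 (mem_unitDisk.mp hz)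
    have h2 := abs_mo_lt_one ha2 (mem_unitDisk.mp hz)
    calc ‖mo (((1:ℝ)/2:ℝ):ℂ) z + mo (((-1:ℝ)/2:ℝ):ℂ) z‖
        ≤ ‖mo (((1:ℝ)/2:ℝ):ℂ) z‖ + ‖mo (((-1:ℝ)/2:ℝ):ℂ) z‖ :=
          norm_add_le _ _
      _ ≤ 2 := by linarith
  refine le_antisymm (Real.sSup_le hub (by norm_num)) ?_
  by_contra hlt
  push_neg at hlt
  set S := supNorm (fun z => mo (((1:ℝ)/2:ℝ):ℂ) z + mo (((-1:ℝ)/2:ℝ):ℂ) z) with hS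
  have hS2 : S < 2 := hlt
  have hS0 : 0 ≤ S := Real.sSup_nonneg (by rintro x ⟨z, hz, rfl⟩; positivity)
  set δ : ℝ := min ((2 - S)/8) (1/4) with hδ
  have hδ0 : 0 < δ := by
    apply lt_min_iff.mpr; constructor <;> [linarith; norm_num]
  have hδ14 : δ ≤ 1/4 := min_le_right _ _
  have hδS : δ ≤ (2 - S)/8 := min_le_left _ _
  set t : ℝ := 1 - δ with htdef
  have ht34 : 3/4 ≤ t := by simp only [htdef]; linarith
  have ht1 : t < 1 := by simp only [htdef]; linarith
  set z : ℂ := ((-t : ℝ):ℂ) with hzdef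
  have hzD : z ∈ unitDisk := by
    rw [mem_unitDisk, hzdef, Complex.norm_real, Real.norm_eq_abs, abs_of_nonpos (by linarith)]
    linarith
  -- values
  have hval1 : mo (((1:ℝ)/2:ℝ):ℂ) z = ((((1:ℝ)/2 - (-t))/(1 - ((1:ℝ)/2)*(-t)) : ℝ) : ℂ) := mo_real _ _
  have hval2 : mo (((-1:ℝ)/2:ℝ):ℂ) z = ((((-1:ℝ)/2 - (-t))/(1 - ((-1:ℝ)/2)*(-t)) : ℝ) : ℂ) := mo_real _ _
  set e1 : ℝ := ((1:ℝ)/2 - (-t))/(1 - ((1:ℝ)/2)*(-t)) with he1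
  set e2 : ℝ := ((-1:ℝ)/2 - (-t))/(1 - ((-1:ℝ)/2)*(-t)) with he2
  have hden1 : (0:ℝ) < 1 - ((1:ℝ)/2)*(-t) := by linarith
  have hden2 : (0:ℝ) < 1 - ((-1:ℝ)/2)*(-t) := by linarith
  have he1ge : 1 - δ ≤ e1 := by
    rw [he1, le_div_iff₀ hden1]
    simp only [htdef]
    nlinarith
  have he2ge : 1 - 3*δ ≤ e2 := by
    rw [he2, le_div_iff₀ hden2]
    simp only [htdef]
    nlinarith
  have hsum : mo (((1:ℝ)/2:ℝ):ℂ) z + mo (((-1:ℝ)/2:ℝ):ℂ) z = ((e1 + e2 : ℝ):ℂ) := by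
    rw [hval1, hval2]
    push_cast
    ring
  have habs : ‖mo (((1:ℝ)/2:ℝ):ℂ) z + mo (((-1:ℝ)/2:ℝ):ℂ) z‖ = |e1 + e2| := by
    rw [hsum, Complex.norm_real, Real.norm_eq_abs]
  have hele : 2 - 4*δ ≤ ‖mo (((1:ℝ)/2:ℝ):ℂ) z + mo (((-1:ℝ)/2:ℝ):ℂ) z‖ := by
    rw [habs]
    calc 2 - 4*δ ≤ e1 + e2 := by linarith
      _ ≤ |e1 + e2| := le_abs_self _
  have hbdd : BddAbove ((fun z => ‖mo (((1:ℝ)/2:ℝ):ℂ) z + mo (((-1:ℝ)/2:ℝ):ℂ) z‖) '' unitDisk) := ⟨2, hub⟩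
  have : 2 - 4*δ ≤ S := le_trans hele (le_csSup hbdd ⟨z, hzD, rfl⟩)
  linarith
theorem stmt_6 :
    ¬ ∃ ψ : ℂ → ℂ, DifferentiableOn ℂ ψ unitDisk ∧
      ∀ f : ℂ → ℂ, DifferentiableOn ℂ f unitDisk →
        BddAbove ((fun z => ‖f z‖) '' unitDisk) →
        blochNorm (fun z => ψ z * f z) = supNorm f := by
  rintro ⟨ψ, hψ, hiso⟩
  -- Step 1 : test with f = 1
  have hsup1 : supNorm (fun _ : ℂ => (1:ℂ)) = 1 := by
    rw [supNorm]
    have himg : ((fun z => ‖(fun _ : ℂ => (1:ℂ)) z‖) '' unitDisk) = {(1:ℝ)} := by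
      simp only [norm_one]
      exact Set.Nonempty.image_const ⟨0, zero_mem_unitDisk⟩ 1
    rw [himg, csSup_singleton]
  have h1 : ‖ψ 0‖ + blochSemi ψ = 1 := by
    have hone := hiso (fun _ => 1) (differentiableOn_const _)
      ⟨1, by rintro x ⟨z, hz, rfl⟩; simp⟩
    rw [hsup1] at hone
    have hmul1 : (fun z => ψ z * (fun _ : ℂ => (1:ℂ)) z) = ψ := by
      funext z; exact mul_one _
    rw [hmul1, blochNorm] at hone
    exact hone
  have hcle1 : ‖ψ 0‖ ≤ 1 := by have := blochSemi_nonneg ψ; linarith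
  -- Step 2 : |ψ a| ≤ 1 - |ψ 0| * |a|  for a in the disk
  have key : ∀ a : ℂ, a ∈ unitDisk →
      ‖ψ a‖ ≤ 1 - ‖ψ 0‖ * ‖a‖ := by
    intro a ha
    have haD := mem_unitDisk.mp ha
    have hmoD : DifferentiableOn ℂ (mo a) unitDisk := fun z hz =>
      (mo_differentiableAt (absmul_lt_one haD (mem_unitDisk.mp hz))).differentiableWithinAt
    have hbdd1 : BddAbove ((fun z => ‖mo a z‖) '' unitDisk) :=
      ⟨1, by rintro x ⟨z, hz, rfl⟩; exact (abs_mo_lt_one haD (mem_unitDisk.mp hz)).le⟩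
    have heq := hiso (mo a) hmoD hbdd1
    rw [supNorm_mo haD, blochNorm] at heq
    have h0 : ‖(fun z => ψ z * mo a z) 0‖
        = ‖ψ 0‖ * ‖a‖ := by
      simp only [mo_apply_zero, norm_mul]
    rw [h0] at heq
    have hbddS : BddAbove ((fun z => (1 - ‖z‖ ^ 2) *
        ‖deriv (fun z => ψ z * mo a z) z‖) '' unitDisk) := by
      by_contra hb
      rw [blochSemi, Real.sSup_of_not_bddAbove hb] at heq
      have hlt : ‖ψ 0‖ * ‖a‖ < 1 :=
        lt_of_le_of_lt (mul_le_of_le_one_left (norm_nonneg a) hcle1) haD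
      linarith
    have hda : DifferentiableAt ℂ ψ a := diffAt_of_mem hψ ha
    have hma : DifferentiableAt ℂ (mo a) a := mo_differentiableAt (absmul_lt_one haD haD)
    have hderiva : deriv (fun z => ψ z * mo a z) a
        = ψ a * ((a * (starRingEnd ℂ) a - 1) / (1 - (starRingEnd ℂ) a * a)^2) := by
      rw [deriv_fun_mul hda hma, mo_apply_self, mo_deriv (absmul_lt_one haD haD)]
      ring
    have hpos : (0:ℝ) < 1 - ‖a‖ ^ 2 := by nlinarith [norm_nonneg a]
    have hval : (1 - ‖a‖ ^ 2) *
        ‖deriv (fun z => ψ z * mo a z) a‖ = ‖ψ a‖ := by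
      rw [hderiva, norm_mul, norm_div, abs_aca haD, norm_pow, abs_one_sub_ca haD]
      field_simp
    have hmem : ‖ψ a‖ ∈ ((fun z => (1 - ‖z‖ ^ 2) *
        ‖deriv (fun z => ψ z * mo a z) z‖) '' unitDisk) := ⟨a, ha, hval⟩
    have hle := le_csSup hbddS hmem
    rw [blochSemi] at heq
    linarith
  -- Step 3 : ψ 0 = 0
  have hc0 : ‖ψ 0‖ = 0 := by
    have ha1 : ‖((((1:ℝ)/2:ℝ)):ℂ)‖ < 1 := by
      rw [Complex.norm_real, Real.norm_eq_abs, abs_lt]; constructor <;> norm_num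
    have ha2 : ‖((((-1:ℝ)/2:ℝ)):ℂ)‖ < 1 := by
      rw [Complex.norm_real, Real.norm_eq_abs, abs_lt]; constructor <;> norm_num
    have habs_a1 : ‖((((1:ℝ)/2:ℝ)):ℂ)‖ = 1/2 := by
      rw [Complex.norm_real, Real.norm_eq_abs, abs_of_nonneg (by norm_num)]
    have habs_a2 : ‖((((-1:ℝ)/2:ℝ)):ℂ)‖ = 1/2 := by
      rw [Complex.norm_real, Real.norm_eq_abs, abs_of_nonpos (by norm_num)]; norm_num
    -- test with f = mo a1
    have heq1 := hiso (mo (((1:ℝ)/2:ℝ):ℂ))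
      (fun z hz => (mo_differentiableAt (absmul_lt_one ha1 (mem_unitDisk.mp hz))).differentiableWithinAt)
      ⟨1, by rintro x ⟨z, hz, rfl⟩; exact (abs_mo_lt_one ha1 (mem_unitDisk.mp hz)).le⟩
    rw [supNorm_mo ha1, blochNorm] at heq1
    have h01 : ‖(fun z => ψ z * mo (((1:ℝ)/2:ℝ):ℂ) z) 0‖
        = ‖ψ 0‖ * (1/2) := by
      simp only [mo_apply_zero, norm_mul, habs_a1]
    rw [h01] at heq1
    -- test with f = mo a2
    have heq2 := hiso (mo (((-1:ℝ)/2:ℝ):ℂ))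
      (fun z hz => (mo_differentiableAt (absmul_lt_one ha2 (mem_unitDisk.mp hz))).differentiableWithinAt)
      ⟨1, by rintro x ⟨z, hz, rfl⟩; exact (abs_mo_lt_one ha2 (mem_unitDisk.mp hz)).le⟩
    rw [supNorm_mo ha2, blochNorm] at heq2
    have h02 : ‖(fun z => ψ z * mo (((-1:ℝ)/2:ℝ):ℂ) z) 0‖
        = ‖ψ 0‖ * (1/2) := by
      simp only [mo_apply_zero, norm_mul, habs_a2]
    rw [h02] at heq2
    -- bddAbove of the two Bloch sets
    have hV1 : BddAbove ((fun z => (1 - ‖z‖ ^ 2) *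
        ‖deriv (fun z => ψ z * mo (((1:ℝ)/2:ℝ):ℂ) z) z‖) '' unitDisk) := by
      by_contra hb
      rw [blochSemi, Real.sSup_of_not_bddAbove hb] at heq1
      nlinarith [norm_nonneg (ψ 0)]
    have hV2 : BddAbove ((fun z => (1 - ‖z‖ ^ 2) *
        ‖deriv (fun z => ψ z * mo (((-1:ℝ)/2:ℝ):ℂ) z) z‖) '' unitDisk) := by
      by_contra hb
      rw [blochSemi, Real.sSup_of_not_bddAbove hb] at heq2
      nlinarith [norm_nonneg (ψ 0)]
    -- test with f = mo a1 + mo a2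
    have hhD : DifferentiableOn ℂ (fun z => mo (((1:ℝ)/2:ℝ):ℂ) z + mo (((-1:ℝ)/2:ℝ):ℂ) z) unitDisk :=
      fun z hz => ((mo_differentiableAt (absmul_lt_one ha1 (mem_unitDisk.mp hz))).add
        (mo_differentiableAt (absmul_lt_one ha2 (mem_unitDisk.mp hz)))).differentiableWithinAt
    have hhB : BddAbove ((fun z => ‖(fun z => mo (((1:ℝ)/2:ℝ):ℂ) z + mo (((-1:ℝ)/2:ℝ):ℂ) z) z‖) '' unitDisk) := by
      refine ⟨2, ?_⟩
      rintro x ⟨z, hz, rfl⟩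
      have h1 := abs_mo_lt_one ha1 (mem_unitDisk.mp hz)
      have h2 := abs_mo_lt_one ha2 (mem_unitDisk.mp hz)
      calc ‖mo (((1:ℝ)/2:ℝ):ℂ) z + mo (((-1:ℝ)/2:ℝ):ℂ) z‖
          ≤ _ + _ := norm_add_le _ _
        _ ≤ 2 := by linarith
    have heqh := hiso _ hhD hhB
    have hbeta : (fun z => ψ z * (fun z => mo (((1:ℝ)/2:ℝ):ℂ) z + mo (((-1:ℝ)/2:ℝ):ℂ) z) z)
        = (fun z => ψ z * (mo (((1:ℝ)/2:ℝ):ℂ) z + mo (((-1:ℝ)/2:ℝ):ℂ) z)) := rfl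
    rw [hbeta, supNorm_pair, blochNorm] at heqh
    have h0h : ‖(fun z => ψ z * (mo (((1:ℝ)/2:ℝ):ℂ) z + mo (((-1:ℝ)/2:ℝ):ℂ) z)) 0‖ = 0 := by
      have hsum0 : mo (((1:ℝ)/2:ℝ):ℂ) 0 + mo (((-1:ℝ)/2:ℝ):ℂ) 0 = 0 := by
        rw [mo_apply_zero, mo_apply_zero, ← Complex.ofReal_add]
        norm_num
      simp only [hsum0, mul_zero, norm_zero]
    rw [h0h, zero_add] at heqh
    -- subadditivity
    have hsub : blochSemi (fun z => ψ z * (mo (((1:ℝ)/2:ℝ):ℂ) z + mo (((-1:ℝ)/2:ℝ):ℂ) z)) ≤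
        blochSemi (fun z => ψ z * mo (((1:ℝ)/2:ℝ):ℂ) z)
        + blochSemi (fun z => ψ z * mo (((-1:ℝ)/2:ℝ):ℂ) z) := by
      rw [blochSemi]
      apply Real.sSup_le
      · rintro x ⟨z, hz, rfl⟩
        have hzD := mem_unitDisk.mp hz
        have hdψ : DifferentiableAt ℂ ψ z := diffAt_of_mem hψ hz
        have hd1 : DifferentiableAt ℂ (mo (((1:ℝ)/2:ℝ):ℂ)) z :=
          mo_differentiableAt (absmul_lt_one ha1 hzD)
        have hd2 : DifferentiableAt ℂ (mo (((-1:ℝ)/2:ℝ):ℂ)) z :=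
          mo_differentiableAt (absmul_lt_one ha2 hzD)
        have hfeq : (fun z => ψ z * (mo (((1:ℝ)/2:ℝ):ℂ) z + mo (((-1:ℝ)/2:ℝ):ℂ) z))
            = (fun z => ψ z * mo (((1:ℝ)/2:ℝ):ℂ) z + ψ z * mo (((-1:ℝ)/2:ℝ):ℂ) z) := by
          funext w; ring
        have hder : deriv (fun z => ψ z * (mo (((1:ℝ)/2:ℝ):ℂ) z + mo (((-1:ℝ)/2:ℝ):ℂ) z)) z
            = deriv (fun z => ψ z * mo (((1:ℝ)/2:ℝ):ℂ) z) z
              + deriv (fun z => ψ z * mo (((-1:ℝ)/2:ℝ):ℂ) z) z := by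
          rw [hfeq]
          exact deriv_fun_add (hdψ.mul hd1) (hdψ.mul hd2)
        have hposz : (0:ℝ) ≤ 1 - ‖z‖ ^ 2 := by nlinarith [norm_nonneg z]
        calc (1 - ‖z‖ ^ 2) *
              ‖deriv (fun z => ψ z * (mo (((1:ℝ)/2:ℝ):ℂ) z + mo (((-1:ℝ)/2:ℝ):ℂ) z)) z‖
            ≤ (1 - ‖z‖ ^ 2) * (‖deriv (fun z => ψ z * mo (((1:ℝ)/2:ℝ):ℂ) z) z‖
              + ‖deriv (fun z => ψ z * mo (((-1:ℝ)/2:ℝ):ℂ) z) z‖) := by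
              rw [hder]; exact mul_le_mul_of_nonneg_left (norm_add_le _ _) hposz
          _ = (1 - ‖z‖ ^ 2) * ‖deriv (fun z => ψ z * mo (((1:ℝ)/2:ℝ):ℂ) z) z‖
              + (1 - ‖z‖ ^ 2) * ‖deriv (fun z => ψ z * mo (((-1:ℝ)/2:ℝ):ℂ) z) z‖ := by
              ring
          _ ≤ blochSemi (fun z => ψ z * mo (((1:ℝ)/2:ℝ):ℂ) z)
              + blochSemi (fun z => ψ z * mo (((-1:ℝ)/2:ℝ):ℂ) z) :=
            add_le_add (le_csSup hV1 ⟨z, hz, rfl⟩) (le_csSup hV2 ⟨z, hz, rfl⟩)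
      · exact add_nonneg (blochSemi_nonneg _) (blochSemi_nonneg _)
    have hcge : 0 ≤ ‖ψ 0‖ := norm_nonneg _
    linarith
  -- Step 4 : conclude ψ ≡ 0 on the disk, contradiction
  have hψ0 : ψ 0 = 0 := by
    have := norm_eq_zero.mp hc0
    exact this
  have hψle1 : ∀ z ∈ unitDisk, ‖ψ z‖ ≤ 1 := by
    intro z hz
    have := key z hz
    rw [hc0] at this
    simpa using this
  have hbddψ : BddAbove ((fun z => ‖ψ z‖) '' unitDisk) :=
    ⟨1, by rintro x ⟨z, hz, rfl⟩; exact hψle1 z hz⟩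
  have hMle1 : supNorm ψ ≤ 1 :=
    Real.sSup_le (by rintro x ⟨z, hz, rfl⟩; exact hψle1 z hz) zero_le_one
  have hM0 : 0 ≤ supNorm ψ :=
    Real.sSup_nonneg (by rintro x ⟨z, hz, rfl⟩; positivity)
  have hzM : ∀ z ∈ unitDisk, ‖ψ z‖ ≤ supNorm ψ :=
    fun z hz => le_csSup hbddψ ⟨z, hz, rfl⟩
  have heqψ := hiso ψ hψ hbddψ
  rw [blochNorm] at heqψ
  have h00 : ‖(fun z => ψ z * ψ z) 0‖ = 0 := by
    simp only [hψ0, mul_zero, norm_zero]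
  rw [h00, zero_add] at heqψ
  -- Schwarz–Pick bound on the Bloch seminorm of ψ²
  have hsemile : ∀ ε : ℝ, 0 < ε →
      blochSemi (fun z => ψ z * ψ z) ≤ (4/5) * (supNorm ψ + ε)^2 := by
    intro ε hε
    have hApos : 0 < supNorm ψ + ε := by linarith
    rw [blochSemi]
    apply Real.sSup_le
    · rintro x ⟨z, hz, rfl⟩
      have hzD := mem_unitDisk.mp hz
      have hsp := schwarz_pick hψ hzM (show supNorm ψ < supNorm ψ + ε by linarith) hz
      have hdψ : DifferentiableAt ℂ ψ z := diffAt_of_mem hψ hz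
      have hder : deriv (fun z => ψ z * ψ z) z = 2 * (ψ z * deriv ψ z) := by
        rw [deriv_fun_mul hdψ hdψ]; ring
      have hposz : (0:ℝ) ≤ 1 - ‖z‖ ^ 2 := by nlinarith [norm_nonneg z]
      have hy0 : 0 ≤ ‖ψ z‖ := norm_nonneg _
      have hyA : ‖ψ z‖ ≤ supNorm ψ + ε := by
        have := hzM z hz; linarith
      have habs2 : ‖deriv (fun z => ψ z * ψ z) z‖
          = 2 * (‖ψ z‖ * ‖deriv ψ z‖) := by
        rw [hder, norm_mul, norm_mul, Complex.norm_two]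
      have hstep : (1 - ‖z‖ ^ 2) * ‖deriv (fun z => ψ z * ψ z) z‖
          = 2 * ‖ψ z‖ * ((1 - ‖z‖ ^ 2) * ‖deriv ψ z‖) := by
        rw [habs2]; ring
      show (1 - ‖z‖ ^ 2) * ‖deriv (fun z => ψ z * ψ z) z‖
          ≤ 4/5 * (supNorm ψ + ε)^2
      rw [hstep]
      have h2 : 2 * ‖ψ z‖ * ((1 - ‖z‖ ^ 2) * ‖deriv ψ z‖)
          ≤ 2 * ‖ψ z‖ *
            (((supNorm ψ + ε)^2 - ‖ψ z‖^2)/(supNorm ψ + ε)) :=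
        mul_le_mul_of_nonneg_left hsp (by positivity)
      refine le_trans h2 ?_
      rw [mul_div_assoc', div_le_iff₀ hApos]
      nlinarith [mul_nonneg (sq_nonneg (‖ψ z‖ - (29/50)*(supNorm ψ + ε)))
          (show (0:ℝ) ≤ ‖ψ z‖ + (29/25)*(supNorm ψ + ε) by positivity),
        mul_nonneg (mul_nonneg hApos.le hApos.le) hy0, pow_pos hApos 3]
    · positivity
  -- pass to the limit ε → 0
  have hfinal : supNorm ψ ≤ (4/5) * (supNorm ψ)^2 := by
    by_contra hcon
    push_neg at hcon
    set δ : ℝ := supNorm ψ - (4/5) * (supNorm ψ)^2 with hδ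
    have hδ0 : 0 < δ := by simp only [hδ]; linarith
    set ε : ℝ := min (δ/3) 1 with hε
    have hε0 : 0 < ε := lt_min_iff.mpr ⟨by linarith, one_pos⟩
    have hε1 : ε ≤ 1 := min_le_right _ _
    have hεδ : ε ≤ δ/3 := min_le_left _ _
    have hle := (heqψ ▸ hsemile ε hε0 : supNorm ψ ≤ (4/5) * (supNorm ψ + ε)^2)
    nlinarith [hMle1, hM0]
  have hMzero : supNorm ψ = 0 := by nlinarith [hM0, hMle1]
  have hψzero : ∀ z ∈ unitDisk, ψ z = 0 := by
    intro z hz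
    have h := hzM z hz
    rw [hMzero] at h
    exact norm_eq_zero.mp (le_antisymm h (norm_nonneg _))
  have hsemi0 : blochSemi ψ = 0 := by
    rw [blochSemi]
    refine le_antisymm (Real.sSup_le ?_ le_rfl)
      (Real.sSup_nonneg ?_)
    · rintro x ⟨z, hz, rfl⟩
      have hder0 : deriv ψ z = 0 := by
        have hmem : unitDisk ∈ nhds z := by
          rw [unitDisk_eq]
          exact isOpen_ball.mem_nhds hz
        have hev : ψ =ᶠ[nhds z] (fun _ => (0:ℂ)) :=
          Filter.eventuallyEq_of_mem hmem (fun w hw => hψzero w hw)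
        rw [hev.deriv_eq, deriv_const]
      show (1 - ‖z‖ ^ 2) * ‖deriv ψ z‖ ≤ 0
      rw [hder0]
      simp
    · rintro x ⟨z, hz, rfl⟩
      have h1 : ‖z‖ < 1 := mem_unitDisk.mp hz
      have h2 := norm_nonneg z
      have h3 : (0:ℝ) ≤ 1 - ‖z‖ ^ 2 := by nlinarith
      exact mul_nonneg h3 (norm_nonneg _)
  rw [hc0, hsemi0] at h1
  norm_num at h1
end

section
/- Let φ be a holomorphic self-map of 𝔻 such that C_φ : H^∞(𝔻) → 𝓑(𝔻) is an isometry, and suppose φ(0) = 0. Then applying C_φ to f(z) = z² gives ‖φ²‖_𝓑 = sup_{z∈𝔻} 2(1-|z|²)|φ(z)||φ'(z)| ≤ 4/(3√3), contradicting ‖f‖_∞ = 1; hence no such φ with φ(0)=0 exists. -/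
open Metric Filter

noncomputable def mob (a w : ℂ) : ℂ := (a - w) / (1 - (starRingEnd ℂ) a * w)

lemma mob_denom_ne (a w : ℂ) (ha : ‖a‖ < 1) (hw : ‖w‖ < 1) :
    1 - (starRingEnd ℂ) a * w ≠ 0 := by
  intro h
  have h1 : (starRingEnd ℂ) a * w = 1 := by linear_combination -h
  have : ‖(starRingEnd ℂ) a * w‖ = 1 := by simp [h1]
  rw [norm_mul, Complex.norm_conj] at this
  nlinarith [norm_nonneg a, norm_nonneg w]

lemma mob_mapsTo (a : ℂ) (ha : ‖a‖ < 1) (w : ℂ) (hw : ‖w‖ < 1) :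
    ‖mob a w‖ < 1 := by
  have hden := mob_denom_ne a w ha hw
  have key : Complex.normSq (1 - (starRingEnd ℂ) a * w) - Complex.normSq (a - w)
      = (1 - Complex.normSq a) * (1 - Complex.normSq w) := by
    simp only [Complex.normSq_apply, Complex.sub_re, Complex.sub_im, Complex.mul_re,
      Complex.mul_im, Complex.one_re, Complex.one_im, Complex.conj_re, Complex.conj_im]
    ring
  have ha2 : Complex.normSq a < 1 := by
    rw [← Complex.sq_norm]; nlinarith [norm_nonneg a]
  have hw2 : Complex.normSq w < 1 := by
    rw [← Complex.sq_norm]; nlinarith [norm_nonneg w]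
  have h1 : Complex.normSq (a - w) < Complex.normSq (1 - (starRingEnd ℂ) a * w) := by nlinarith
  rw [← Complex.sq_norm, ← Complex.sq_norm] at h1
  have hpos : 0 < ‖1 - (starRingEnd ℂ) a * w‖ := norm_pos_iff.mpr hden
  rw [mob, norm_div, div_lt_one hpos]
  nlinarith [norm_nonneg (a - w)]

lemma mob_hasDerivAt (a w : ℂ) (hden : 1 - (starRingEnd ℂ) a * w ≠ 0) :
    HasDerivAt (mob a) (((Complex.normSq a : ℂ) - 1) / (1 - (starRingEnd ℂ) a * w) ^ 2) w := by
  have h1 : HasDerivAt (fun w : ℂ => a - w) (-1) w := (hasDerivAt_id w).const_sub a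
  have h2 : HasDerivAt (fun w : ℂ => 1 - (starRingEnd ℂ) a * w) (-((starRingEnd ℂ) a)) w := by
    simpa using ((hasDerivAt_id w).const_mul ((starRingEnd ℂ) a)).const_sub 1
  have := h1.div h2 hden
  refine this.congr_deriv ?_
  have hc : (starRingEnd ℂ) a * a = (Complex.normSq a : ℂ) := by
    rw [mul_comm, Complex.mul_conj]
  rw [← hc]; ring

lemma schwarz_pick_s9 (φ : ℂ → ℂ) (hφ : DifferentiableOn ℂ φ (ball 0 1))
    (hφm : Set.MapsTo φ (ball 0 1) (ball 0 1)) (z : ℂ) (hz : z ∈ Metric.ball (0:ℂ) 1) :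
    (1 - ‖z‖ ^ 2) * ‖deriv φ z‖ ≤ 1 - ‖φ z‖ ^ 2 := by
  have hz' : ‖z‖ < 1 := by simpa [Complex.norm_def] using mem_ball_zero_iff.1 hz
  set b := φ z with hbdef
  have hb : ‖b‖ < 1 := by
    simpa [Complex.norm_def] using mem_ball_zero_iff.1 (hφm hz)
  -- the composed map
  set ψ : ℂ → ℂ := mob b ∘ (φ ∘ mob z) with hψdef
  have memball : ∀ (a w : ℂ), ‖a‖ < 1 → ‖w‖ < 1 →
      mob a w ∈ Metric.ball (0:ℂ) 1 := fun a w ha hw =>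
    mem_ball_zero_iff.2 (by simpa [Complex.norm_def] using mob_mapsTo a ha w hw)
  have hψm : Set.MapsTo ψ (ball 0 1) (ball 0 1) := by
    intro w hw
    have hw' : ‖w‖ < 1 := by simpa [Complex.norm_def] using mem_ball_zero_iff.1 hw
    have h1 : mob z w ∈ Metric.ball (0:ℂ) 1 := memball z w hz' hw'
    have h2 : ‖φ (mob z w)‖ < 1 := by
      simpa [Complex.norm_def] using mem_ball_zero_iff.1 (hφm h1)
    exact memball b _ hb h2
  have hψd : DifferentiableOn ℂ ψ (ball 0 1) := by
    intro w hw
    have hw' : ‖w‖ < 1 := by simpa [Complex.norm_def] using mem_ball_zero_iff.1 hw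
    have h1 : mob z w ∈ Metric.ball (0:ℂ) 1 := memball z w hz' hw'
    have h1' : ‖mob z w‖ < 1 := by
      simpa [Complex.norm_def] using mem_ball_zero_iff.1 h1
    have h2 : ‖φ (mob z w)‖ < 1 := by
      simpa [Complex.norm_def] using mem_ball_zero_iff.1 (hφm h1)
    have d1 : DifferentiableAt ℂ (mob z) w :=
      (mob_hasDerivAt z w (mob_denom_ne z w hz' hw')).differentiableAt
    have d2 : DifferentiableAt ℂ φ (mob z w) :=
      hφ.differentiableAt (isOpen_ball.mem_nhds h1)
    have d3 : DifferentiableAt ℂ (mob b) (φ (mob z w)) :=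
      (mob_hasDerivAt b _ (mob_denom_ne b _ hb h2)).differentiableAt
    exact (d3.comp w (d2.comp w d1)).differentiableWithinAt
  have hm0 : mob z 0 = z := by simp [mob]
  have hψ0 : ψ 0 = 0 := by
    have h : ψ 0 = mob b (φ (mob z 0)) := rfl
    rw [h, hm0, ← hbdef, mob, sub_self, zero_div]
  -- derivatives
  have h1 : HasDerivAt (mob z) ((Complex.normSq z : ℂ) - 1) 0 := by
    have := mob_hasDerivAt z 0 (by simp)
    simpa using this
  have hφd : HasDerivAt φ (deriv φ z) (mob z 0) := by
    rw [hm0]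
    exact (hφ.differentiableAt (isOpen_ball.mem_nhds hz)).hasDerivAt
  have hA : HasDerivAt (φ ∘ mob z) (deriv φ z * ((Complex.normSq z : ℂ) - 1)) 0 :=
    hφd.comp 0 h1
  have h2 : HasDerivAt (mob b)
      (((Complex.normSq b : ℂ) - 1) / (1 - (starRingEnd ℂ) b * b) ^ 2) ((φ ∘ mob z) 0) := by
    have hne : 1 - (starRingEnd ℂ) b * b ≠ 0 := mob_denom_ne b b hb hb
    have : (φ ∘ mob z) 0 = b := by simp [Function.comp_apply, hm0, hbdef]
    rw [this]
    exact mob_hasDerivAt b b hne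
  have hB : HasDerivAt ψ
      ((((Complex.normSq b : ℂ) - 1) / (1 - (starRingEnd ℂ) b * b) ^ 2) *
        (deriv φ z * ((Complex.normSq z : ℂ) - 1))) 0 := h2.comp 0 hA
  have habs : ‖deriv ψ 0‖ ≤ 1 :=
    Complex.norm_deriv_le_one_of_mapsTo_ball hψd
      (hψm.mono_right (by rw [hψ0]; exact ball_subset_closedBall)) one_pos
  rw [hB.deriv] at habs
  -- compute the absolute values
  have hcb : (starRingEnd ℂ) b * b = (Complex.normSq b : ℂ) := by
    rw [mul_comm, Complex.mul_conj]
  have hnb : Complex.normSq b < 1 := by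
    rw [← Complex.sq_norm]; nlinarith [norm_nonneg b]
  have hnz : Complex.normSq z < 1 := by
    rw [← Complex.sq_norm]; nlinarith [norm_nonneg z]
  have e1 : ‖(Complex.normSq z : ℂ) - 1‖ = 1 - Complex.normSq z := by
    have : ((Complex.normSq z : ℂ) - 1) = ((Complex.normSq z - 1 : ℝ) : ℂ) := by push_cast; ring
    rw [this, Complex.norm_real, Real.norm_eq_abs, abs_of_nonpos (by linarith)]; ring
  have e2 : ‖(Complex.normSq b : ℂ) - 1‖ = 1 - Complex.normSq b := by
    have : ((Complex.normSq b : ℂ) - 1) = ((Complex.normSq b - 1 : ℝ) : ℂ) := by push_cast; ring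
    rw [this, Complex.norm_real, Real.norm_eq_abs, abs_of_nonpos (by linarith)]; ring
  have e3 : ‖1 - (starRingEnd ℂ) b * b‖ = 1 - Complex.normSq b := by
    rw [hcb, show (1:ℂ) - (Complex.normSq b : ℂ) = ((1 - Complex.normSq b : ℝ) : ℂ) by push_cast; ring,
      Complex.norm_real, Real.norm_eq_abs]
    exact abs_of_nonneg (by linarith)
  rw [norm_mul, norm_mul, norm_div, norm_pow, e1, e2, e3] at habs
  have hpos : 0 < 1 - Complex.normSq b := by linarith
  rw [Complex.sq_norm, Complex.sq_norm]
  have key : (1 - Complex.normSq b) * ((1 - Complex.normSq b) / (1 - Complex.normSq b) ^ 2 *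
      (‖deriv φ z‖ * (1 - Complex.normSq z)))
      = (1 - Complex.normSq z) * ‖deriv φ z‖ := by
    field_simp
  have h2' := mul_le_mul_of_nonneg_left habs hpos.le
  rw [key, mul_one] at h2'
  exact h2'

theorem stmt_9 (φ : ℂ → ℂ) (hφ : DifferentiableOn ℂ φ unitDisk)
    (hφm : Set.MapsTo φ unitDisk unitDisk) (h0 : φ 0 = 0)
    (hiso : ∀ f : ℂ → ℂ, DifferentiableOn ℂ f unitDisk →
      BddAbove ((fun z => ‖f z‖) '' unitDisk) →
      blochNorm (f ∘ φ) = supNorm f) :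
    False := by
  have hUD : unitDisk = ball (0:ℂ) 1 := rfl
  have habsmem : ∀ z : ℂ, z ∈ unitDisk → ‖z‖ < 1 := by
    intro z hz
    rw [hUD] at hz
    simpa [Complex.norm_def] using mem_ball_zero_iff.1 hz
  set f : ℂ → ℂ := fun z => z ^ 2 with hf
  have hfd : DifferentiableOn ℂ f unitDisk := (differentiable_pow 2).differentiableOn
  have hbdd : BddAbove ((fun z => ‖f z‖) '' unitDisk) := by
    refine ⟨1, ?_⟩
    rintro x ⟨z, hz, rfl⟩
    have hz' := habsmem z hz
    simp only [hf, norm_pow]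
    nlinarith [norm_nonneg z]
  have heq := hiso f hfd hbdd
  have hsup : supNorm f = 1 := by
    have himg : (fun z => ‖f z‖) '' unitDisk = Set.Ico (0:ℝ) 1 := by
      ext x
      constructor
      · rintro ⟨z, hz, rfl⟩
        have hz' := habsmem z hz
        refine ⟨by positivity, ?_⟩
        simp only [hf, norm_pow]
        nlinarith [norm_nonneg z]
      · rintro ⟨hx0, hx1⟩
        refine ⟨(Real.sqrt x : ℂ), ?_, ?_⟩
        · rw [hUD]
          refine mem_ball_zero_iff.2 ?_
          have h1 : Real.sqrt x < 1 := by
            have := Real.sqrt_lt_sqrt hx0 hx1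
            simpa using this
          simpa [Complex.norm_real, Real.norm_eq_abs, _root_.abs_of_nonneg (Real.sqrt_nonneg x)] using h1
        · simp only [hf, norm_pow, Complex.norm_real, Real.norm_eq_abs, _root_.abs_of_nonneg (Real.sqrt_nonneg x)]
          exact Real.sq_sqrt hx0
    rw [supNorm, himg, csSup_Ico zero_lt_one]
  rw [hsup] at heq
  have hc0 : (f ∘ φ) 0 = 0 := by simp [hf, Function.comp_apply, h0]
  have hsemi : blochSemi (f ∘ φ) = 1 := by
    have : blochNorm (f ∘ φ) = ‖(f ∘ φ) 0‖ + blochSemi (f ∘ φ) := rfl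
    rw [this, hc0] at heq
    simpa using heq
  -- now bound the Bloch seminorm by 4/5
  have hbound : blochSemi (f ∘ φ) ≤ 4 / 5 := by
    rw [blochSemi]
    apply Real.sSup_le
    · rintro x ⟨z, hz, rfl⟩
      have hz' := habsmem z hz
      have hφz := habsmem (φ z) (hφm hz)
      have hd : HasDerivAt φ (deriv φ z) z := by
        have : z ∈ ball (0:ℂ) 1 := by rwa [hUD] at hz
        exact (hφ.differentiableAt (by rw [hUD]; exact isOpen_ball.mem_nhds this)).hasDerivAt
      have hderiv : deriv (f ∘ φ) z = 2 * φ z * deriv φ z := by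
        have hcomp : f ∘ φ = fun w => φ w ^ 2 := rfl
        rw [hcomp]
        have := (hd.pow 2).deriv
        simp at this
        exact this
      show (1 - ‖z‖ ^ 2) * ‖deriv (f ∘ φ) z‖ ≤ 4 / 5
      rw [hderiv]
      have hsp : (1 - ‖z‖ ^ 2) * ‖deriv φ z‖
          ≤ 1 - ‖φ z‖ ^ 2 := by
        apply schwarz_pick_s9 φ
        · rw [← hUD]; exact hφ
        · rw [← hUD]; exact hφm
        · rw [← hUD]; exact hz
      have hstep : (1 - ‖z‖ ^ 2) * ‖2 * φ z * deriv φ z‖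
          = 2 * ‖φ z‖ * ((1 - ‖z‖ ^ 2) * ‖deriv φ z‖) := by
        rw [norm_mul, norm_mul, Complex.norm_two]
        ring
      rw [hstep]
      have h1 : 2 * ‖φ z‖ * ((1 - ‖z‖ ^ 2) * ‖deriv φ z‖)
          ≤ 2 * ‖φ z‖ * (1 - ‖φ z‖ ^ 2) :=
        mul_le_mul_of_nonneg_left hsp (by positivity)
      refine h1.trans ?_
      set t := ‖φ z‖ with ht
      have ht0 : 0 ≤ t := norm_nonneg _
      nlinarith [mul_nonneg ht0 (sq_nonneg (t - 29/50)), sq_nonneg (t - 29/50)]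
    · norm_num
  rw [hsemi] at hbound
  norm_num at hbound
end

section
/- Let ψ be holomorphic on 𝔻 and φ a holomorphic self-map of 𝔻. If ψ ∈ 𝓑(𝔻) and θ_{ψ,φ} := sup_{z∈𝔻} |ψ(z)|(1-|z|²)|φ'(z)|/(1-|φ(z)|²) < ∞, then for every f ∈ H^∞(𝔻), the function ψ·(f∘φ) belongs to 𝓑(𝔻) and ‖ψ(f∘φ)‖_𝓑 ≤ (‖ψ‖_𝓑 + θ_{ψ,φ})‖f‖_∞. -/
open Metric Filter Set

/-- Cauchy estimate at the center. -/
lemma center_deriv_le {g : ℂ → ℂ} {M : ℝ} (hg : DifferentiableOn ℂ g (ball 0 1))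
    (hM : ∀ z ∈ ball (0:ℂ) 1, ‖g z‖ ≤ M) :
    ‖deriv g 0‖ ≤ M := by
  have hM0 : 0 ≤ M := (norm_nonneg _).trans (hM 0 (by simp))
  have key : ∀ r : ℝ, 0 < r → r < 1 → ‖deriv g 0‖ ≤ M / r := by
    intro r hr0 hr1
    set R : NNReal := ⟨r, hr0.le⟩ with hR
    have hco : (R : ℝ) = r := rfl
    have hd : DiffContOnCl ℂ g (ball 0 (R:ℝ)) := by
      apply DifferentiableOn.diffContOnCl
      rw [closure_ball (0:ℂ) (by rw [hco]; exact hr0.ne')]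
      exact hg.mono (by rw [hco]; exact closedBall_subset_ball hr1)
    have hps : HasFPowerSeriesOnBall g (cauchyPowerSeries g 0 R) 0 R :=
      hd.hasFPowerSeriesOnBall (by exact_mod_cast hr0)
    have hder : deriv g 0 = (cauchyPowerSeries g 0 R).coeff 1 :=
      hps.hasFPowerSeriesAt.deriv
    have hnorm : ‖(cauchyPowerSeries g 0 R).coeff 1‖ ≤
        ((2 * Real.pi)⁻¹ * ∫ θ : ℝ in (0)..2 * Real.pi,
          ‖g (circleMap 0 R θ)‖) * |(R:ℝ)|⁻¹ ^ 1 := by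
      rw [← FormalMultilinearSeries.norm_apply_eq_norm_coef]
      exact norm_cauchyPowerSeries_le g 0 R 1
    have hint : ∫ θ : ℝ in (0)..2 * Real.pi, ‖g (circleMap 0 R θ)‖ ≤ 2 * Real.pi * M := by
      have hcont : ContinuousOn (fun θ : ℝ => ‖g (circleMap 0 R θ)‖) (Set.uIcc 0 (2*Real.pi)) := by
        apply (hg.continuousOn.comp (continuous_circleMap 0 R).continuousOn ?_).norm
        intro θ _
        simp only [mem_ball, dist_zero_right]
        rw [norm_circleMap_zero, hco, abs_of_nonneg hr0.le]
        exact hr1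
      calc ∫ θ : ℝ in (0)..2 * Real.pi, ‖g (circleMap 0 R θ)‖
          ≤ ∫ _ : ℝ in (0)..2 * Real.pi, M := by
            apply intervalIntegral.integral_mono_on Real.two_pi_pos.le
            · exact hcont.intervalIntegrable
            · exact intervalIntegrable_const
            · intro θ _
              apply hM
              simp only [mem_ball, dist_zero_right]
              rw [norm_circleMap_zero, hco, abs_of_nonneg hr0.le]
              exact hr1
        _ = 2 * Real.pi * M := by simp [mul_comm]
    have : ‖deriv g 0‖ ≤ ((2 * Real.pi)⁻¹ * (2 * Real.pi * M)) * r⁻¹ := by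
      rw [hder]
      refine hnorm.trans ?_
      rw [hco, abs_of_nonneg hr0.le, pow_one]
      apply mul_le_mul_of_nonneg_right _ (by positivity)
      exact mul_le_mul_of_nonneg_left hint (by positivity)
    rw [inv_mul_cancel_left₀ (by positivity : (2*Real.pi) ≠ 0)] at this
    rw [div_eq_mul_inv]; exact this
  have htend : Tendsto (fun r : ℝ => M / r) (nhdsWithin 1 (Set.Iio 1)) (nhds M) := by
    have : Tendsto (fun r : ℝ => M / r) (nhds 1) (nhds (M / 1)) :=
      tendsto_const_nhds.div tendsto_id one_ne_zero
    simpa using this.mono_left nhdsWithin_le_nhds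
  refine ge_of_tendsto htend ?_
  filter_upwards [Ioo_mem_nhdsLT_of_mem (⟨zero_lt_one, le_rfl⟩ : (1:ℝ) ∈ Set.Ioc 0 1)] with r hr
  exact key r hr.1 hr.2

lemma normSq_identity (w ζ : ℂ) :
    Complex.normSq (1 + (starRingEnd ℂ) w * ζ) - Complex.normSq (ζ + w) =
      (1 - Complex.normSq w) * (1 - Complex.normSq ζ) := by
  simp only [Complex.normSq_apply, Complex.add_re, Complex.add_im, Complex.mul_re,
    Complex.mul_im, Complex.conj_re, Complex.conj_im, Complex.one_re, Complex.one_im]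
  ring

/-- Schwarz–Pick-type estimate: (1-|w|²)|f'(w)| ≤ M for f bounded by M on the disk. -/
lemma schwarz_pick_s10 {f : ℂ → ℂ} {M : ℝ} (hf : DifferentiableOn ℂ f (ball 0 1))
    (hM : ∀ z ∈ ball (0:ℂ) 1, ‖f z‖ ≤ M) {w : ℂ} (hw : w ∈ ball (0:ℂ) 1) :
    (1 - ‖w‖ ^ 2) * ‖deriv f w‖ ≤ M := by
  have hw1 : Complex.normSq w < 1 := by
    rw [← Complex.sq_norm]
    have : ‖w‖ < 1 := by simpa using mem_ball_zero_iff.mp hw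
    nlinarith [norm_nonneg w]
  set m : ℂ → ℂ := fun ζ => (ζ + w) / (1 + (starRingEnd ℂ) w * ζ) with hm
  have hden : ∀ ζ ∈ ball (0:ℂ) 1, 1 + (starRingEnd ℂ) w * ζ ≠ 0 := by
    intro ζ hζ h0
    have hζ1 : Complex.normSq ζ < 1 := by
      rw [← Complex.sq_norm]
      have : ‖ζ‖ < 1 := by simpa using mem_ball_zero_iff.mp hζ
      nlinarith [norm_nonneg ζ]
    have := normSq_identity w ζ
    rw [h0, map_zero] at this
    nlinarith [Complex.normSq_nonneg (ζ + w)]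
  have hmaps : MapsTo m (ball 0 1) (ball 0 1) := by
    intro ζ hζ
    have hζ1 : Complex.normSq ζ < 1 := by
      rw [← Complex.sq_norm]
      have : ‖ζ‖ < 1 := by simpa using mem_ball_zero_iff.mp hζ
      nlinarith [norm_nonneg ζ]
    have hid := normSq_identity w ζ
    have hdpos : 0 < Complex.normSq (1 + (starRingEnd ℂ) w * ζ) :=
      Complex.normSq_pos.mpr (hden ζ hζ)
    rw [mem_ball_zero_iff]
    have : Complex.normSq (m ζ) < 1 := by
      rw [hm]
      simp only [map_div₀]
      rw [div_lt_one hdpos]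
      nlinarith
    nlinarith [Complex.sq_norm (m ζ), norm_nonneg (m ζ)]
  have hmdiff : DifferentiableOn ℂ m (ball 0 1) := by
    apply DifferentiableOn.div
    · exact (differentiable_id.add_const w).differentiableOn
    · exact ((differentiable_const _).add ((differentiable_const _).mul differentiable_id)).differentiableOn
    · exact hden
  have hm0 : m 0 = w := by simp [hm]
  have hmd : HasDerivAt m (1 - w * (starRingEnd ℂ) w) 0 := by
    have h1 : HasDerivAt (fun ζ : ℂ => ζ + w) 1 0 := (hasDerivAt_id 0).add_const w
    have h2 : HasDerivAt (fun ζ : ℂ => 1 + (starRingEnd ℂ) w * ζ) ((starRingEnd ℂ) w) 0 := by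
      simpa using ((hasDerivAt_id 0).const_mul ((starRingEnd ℂ) w)).const_add 1
    have h0 : (1 : ℂ) + (starRingEnd ℂ) w * 0 ≠ 0 := by simp
    have := h1.fun_div h2 h0
    refine this.congr_deriv ?_
    simp
  set g : ℂ → ℂ := f ∘ m with hg
  have hgd : DifferentiableOn ℂ g (ball 0 1) := hf.comp hmdiff hmaps
  have hgM : ∀ z ∈ ball (0:ℂ) 1, ‖g z‖ ≤ M := fun z hz => hM _ (hmaps hz)
  have h0mem : (0:ℂ) ∈ ball (0:ℂ) 1 := by simp
  have hfd : DifferentiableAt ℂ f w := hf.differentiableAt (isOpen_ball.mem_nhds hw)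
  have hgderiv : deriv g 0 = deriv f w * (1 - w * (starRingEnd ℂ) w) := by
    rw [hg, deriv_comp 0 (hm0 ▸ hfd) hmd.differentiableAt, hmd.deriv, hm0]
  have hkey := center_deriv_le hgd hgM
  rw [hgderiv, norm_mul] at hkey
  have habs : ‖1 - w * (starRingEnd ℂ) w‖ = 1 - ‖w‖ ^ 2 := by
    rw [Complex.mul_conj, Complex.sq_norm]
    have : ((1:ℂ) - Complex.normSq w) = ((1 - Complex.normSq w : ℝ) : ℂ) := by push_cast; ring
    rw [this, Complex.norm_of_nonneg (by linarith)]
  rw [habs] at hkey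
  linarith [mul_comm (‖deriv f w‖) (1 - ‖w‖ ^ 2) ▸ hkey]

open Metric Filter

theorem stmt_10 (ψ φ : ℂ → ℂ) (hψ : DifferentiableOn ℂ ψ unitDisk)
    (hφ : DifferentiableOn ℂ φ unitDisk) (hφm : Set.MapsTo φ unitDisk unitDisk)
    (hψB : BddAbove ((fun z => (1 - ‖z‖ ^ 2) * ‖deriv ψ z‖) '' unitDisk))
    (θ : ℝ)
    (hθ : IsLUB {x : ℝ | ∃ z ∈ unitDisk, x = ‖ψ z‖ *
        ((1 - ‖z‖ ^ 2) * ‖deriv φ z‖ / (1 - ‖φ z‖ ^ 2))} θ) :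
    ∀ f : ℂ → ℂ, DifferentiableOn ℂ f unitDisk →
      BddAbove ((fun z => ‖f z‖) '' unitDisk) →
      BddAbove ((fun z => (1 - ‖z‖ ^ 2) *
          ‖deriv (fun w => ψ w * f (φ w)) z‖) '' unitDisk) ∧
      blochNorm (fun w => ψ w * f (φ w)) ≤ (blochNorm ψ + θ) * supNorm f := by
  intro f hf hfB
  have hDopen : IsOpen unitDisk := isOpen_ball
  have h0D : (0:ℂ) ∈ unitDisk := by simp [unitDisk]
  have hsq : ∀ z ∈ unitDisk, 0 < 1 - ‖z‖ ^ 2 := by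
    intro z hz
    have : ‖z‖ < 1 := by
      simpa [unitDisk] using mem_ball_zero_iff.mp hz
    nlinarith [norm_nonneg z]
  -- sup norm of f
  set M := supNorm f with hMdef
  have hfM : ∀ z ∈ unitDisk, ‖f z‖ ≤ M := fun z hz =>
    le_csSup hfB ⟨z, hz, rfl⟩
  have hM0 : 0 ≤ M := (norm_nonneg _).trans (hfM 0 h0D)
  -- bloch seminorm of ψ pointwise bound
  have hψS : ∀ z ∈ unitDisk, (1 - ‖z‖ ^ 2) * ‖deriv ψ z‖ ≤ blochSemi ψ :=
    fun z hz => le_csSup hψB ⟨z, hz, rfl⟩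
  -- θ facts
  have hθub : ∀ z ∈ unitDisk, ‖ψ z‖ *
      ((1 - ‖z‖ ^ 2) * ‖deriv φ z‖ / (1 - ‖φ z‖ ^ 2)) ≤ θ :=
    fun z hz => hθ.1 ⟨z, hz, rfl⟩
  -- Schwarz–Pick bound for f
  have hSP : ∀ w ∈ unitDisk, (1 - ‖w‖ ^ 2) * ‖deriv f w‖ ≤ M :=
    fun w hw => schwarz_pick_s10 hf hfM hw
  -- derivative formula
  set F : ℂ → ℂ := fun w => ψ w * f (φ w) with hF
  have hFd : ∀ z ∈ unitDisk, deriv F z =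
      deriv ψ z * f (φ z) + ψ z * (deriv f (φ z) * deriv φ z) := by
    intro z hz
    have hψa : DifferentiableAt ℂ ψ z := hψ.differentiableAt (hDopen.mem_nhds hz)
    have hφa : DifferentiableAt ℂ φ z := hφ.differentiableAt (hDopen.mem_nhds hz)
    have hfa : DifferentiableAt ℂ f (φ z) := hf.differentiableAt (hDopen.mem_nhds (hφm hz))
    have hcomp : deriv (fun w => f (φ w)) z = deriv f (φ z) * deriv φ z :=
      deriv_comp z hfa hφa
    have hfφ : DifferentiableAt ℂ (fun w => f (φ w)) z := DifferentiableAt.comp z hfa hφa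
    rw [hF, deriv_fun_mul hψa hfφ, hcomp]
  -- pointwise bound on the Bloch term of F
  have hptw : ∀ z ∈ unitDisk, (1 - ‖z‖ ^ 2) * ‖deriv F z‖ ≤
      blochSemi ψ * M + θ * M := by
    intro z hz
    have h1 : 0 < 1 - ‖z‖ ^ 2 := hsq z hz
    have h2 : 0 < 1 - ‖φ z‖ ^ 2 := hsq _ (hφm hz)
    rw [hFd z hz]
    have hA : (1 - ‖z‖ ^ 2) * ‖deriv ψ z * f (φ z)‖ ≤ blochSemi ψ * M := by
      rw [norm_mul]
      calc (1 - ‖z‖ ^ 2) * (‖deriv ψ z‖ * ‖f (φ z)‖)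
          = ((1 - ‖z‖ ^ 2) * ‖deriv ψ z‖) * ‖f (φ z)‖ := by ring
        _ ≤ blochSemi ψ * M := by
            apply mul_le_mul (hψS z hz) (hfM _ (hφm hz)) (norm_nonneg _)
            exact le_trans (mul_nonneg (hsq 0 h0D).le (norm_nonneg _)) (hψS 0 h0D)
    have hB : (1 - ‖z‖ ^ 2) * ‖ψ z * (deriv f (φ z) * deriv φ z)‖ ≤
        θ * M := by
      rw [norm_mul, norm_mul]
      have hfd : ‖deriv f (φ z)‖ ≤ M / (1 - ‖φ z‖ ^ 2) := by
        rw [le_div_iff₀ h2]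
        have := hSP (φ z) (hφm hz)
        linarith [mul_comm (‖deriv f (φ z)‖) (1 - ‖φ z‖ ^ 2) ▸ this]
      calc (1 - ‖z‖ ^ 2) *
            (‖ψ z‖ * (‖deriv f (φ z)‖ * ‖deriv φ z‖))
          = (‖ψ z‖ * ((1 - ‖z‖ ^ 2) * ‖deriv φ z‖)) *
              ‖deriv f (φ z)‖ := by ring
        _ ≤ (‖ψ z‖ * ((1 - ‖z‖ ^ 2) * ‖deriv φ z‖)) *
              (M / (1 - ‖φ z‖ ^ 2)) := by
            apply mul_le_mul_of_nonneg_left hfd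
            positivity
        _ = (‖ψ z‖ *
              ((1 - ‖z‖ ^ 2) * ‖deriv φ z‖ /
                (1 - ‖φ z‖ ^ 2))) * M := by ring
        _ ≤ θ * M := mul_le_mul_of_nonneg_right (hθub z hz) hM0
    calc (1 - ‖z‖ ^ 2) *
          ‖deriv ψ z * f (φ z) + ψ z * (deriv f (φ z) * deriv φ z)‖
        ≤ (1 - ‖z‖ ^ 2) *
          (‖deriv ψ z * f (φ z)‖ + ‖ψ z * (deriv f (φ z) * deriv φ z)‖) :=
          mul_le_mul_of_nonneg_left (norm_add_le _ _) h1.le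
      _ = (1 - ‖z‖ ^ 2) * ‖deriv ψ z * f (φ z)‖ +
          (1 - ‖z‖ ^ 2) * ‖ψ z * (deriv f (φ z) * deriv φ z)‖ := by ring
      _ ≤ blochSemi ψ * M + θ * M := add_le_add hA hB
  have hbdd : BddAbove ((fun z => (1 - ‖z‖ ^ 2) *
      ‖deriv F z‖) '' unitDisk) := by
    refine ⟨blochSemi ψ * M + θ * M, ?_⟩
    rintro x ⟨z, hz, rfl⟩
    exact hptw z hz
  refine ⟨hbdd, ?_⟩
  have hsemi : blochSemi F ≤ blochSemi ψ * M + θ * M := by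
    apply csSup_le (Set.Nonempty.image _ ⟨0, h0D⟩)
    rintro x ⟨z, hz, rfl⟩
    exact hptw z hz
  have hF0 : ‖F 0‖ ≤ ‖ψ 0‖ * M := by
    rw [hF]; simp only [norm_mul]
    exact mul_le_mul_of_nonneg_left (hfM _ (hφm h0D)) (norm_nonneg _)
  have hθ0 : 0 ≤ θ := by
    refine le_trans ?_ (hθub 0 h0D)
    exact mul_nonneg (norm_nonneg _) (div_nonneg
      (mul_nonneg (hsq 0 h0D).le (norm_nonneg _)) (hsq _ (hφm h0D)).le)
  rw [blochNorm, blochNorm]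
  have : (‖ψ 0‖ + blochSemi ψ + θ) * M =
      ‖ψ 0‖ * M + (blochSemi ψ * M + θ * M) := by ring
  rw [this]
  exact add_le_add hF0 hsemi
end
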